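/- Let Ω be a finite alphabet with integer weight w : Ω → ℕ₊, let F be a reduced set of forbidden words (no word in F contains another as a subword), and for n ≥ 0 let f(n) count words of total weight n containing no forbidden subword (f(0) = 1) and f_W(n) count words of total weight n ending in W ∈ F and containing no other forbidden subword. Then for all n ≥ 1: f(n) + Σ_{W∈F} f_W(n) = Σ_{s∈Ω} f(n − w(s)), where f of a negative argument is 0. -/

import Mathlib

set_option linter.unusedSectionVars false
set_option linter.unusedVariables false

variable {Ω : Type*} [Fintype Ω] [DecidableEq Ω]

/-- The total weight of a word. -/
def wt (w : Ω → ℕ) (l : List Ω) : ℕ := (l.map w).sum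

/-- `fCount w F n` counts words of total weight `n` containing no forbidden subword. -/
noncomputable def fCount (w : Ω → ℕ) (F : Finset (List Ω)) (n : ℕ) : ℕ :=
  {l : List Ω | wt w l = n ∧ ∀ V ∈ F, ¬ V <:+: l}.ncard

/-- `fWCount w F W n` counts words of total weight `n` ending in `W` whose only occurrence
of a forbidden subword is that final copy of `W`. -/
noncomputable def fWCount (w : Ω → ℕ) (F : Finset (List Ω)) (W : List Ω) (n : ℕ) : ℕ :=
  {l : List Ω | wt w l = n ∧ W <:+ l ∧
    ∀ V ∈ F, ∀ p s : List Ω, l = p ++ V ++ s → V = W ∧ s = []}.ncard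

private lemma wt_append (w : Ω → ℕ) (a b : List Ω) : wt w (a ++ b) = wt w a + wt w b := by
  simp [wt]

private lemma length_le_wt (w : Ω → ℕ) (hw : ∀ s, 0 < w s) (l : List Ω) :
    l.length ≤ wt w l := by
  induction l with
  | nil => simp [wt]
  | cons a t ih =>
    have := hw a
    simp only [wt, List.map_cons, List.sum_cons, List.length_cons] at *
    omega

private lemma wt_finite (w : Ω → ℕ) (hw : ∀ s, 0 < w s) (P : List Ω → Prop) (n : ℕ) :
    {l : List Ω | wt w l = n ∧ P l}.Finite := by
  apply (List.finite_length_le Ω n).subset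
  rintro l ⟨h1, -⟩
  simpa using h1 ▸ length_le_wt w hw l

private lemma wt_concat (w : Ω → ℕ) (l : List Ω) (s : Ω) :
    wt w (l ++ [s]) = wt w l + w s := by
  simp [wt]

private lemma mem_wt_le (w : Ω → ℕ) {s : Ω} {l : List Ω} (h : s ∈ l) : w s ≤ wt w l :=
  List.single_le_sum (fun _ _ => Nat.zero_le _) _ (List.mem_map_of_mem (f := w) h)

private lemma ncard_union_biUnion {α β : Type*} [DecidableEq β] (A : Set α) (F : Finset β)
    (B : β → Set α) (hA : A.Finite) (hB : ∀ b ∈ F, (B b).Finite)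
    (hAB : ∀ b ∈ F, Disjoint A (B b))
    (hBB : ∀ b ∈ F, ∀ c ∈ F, b ≠ c → Disjoint (B b) (B c)) :
    (A ∪ ⋃ b ∈ F, B b).ncard = A.ncard + ∑ b ∈ F, (B b).ncard := by
  classical
  induction F using Finset.induction_on with
  | empty => simp
  | @insert a s ha ih =>
    have h1 : (A ∪ ⋃ b ∈ insert a s, B b) = (A ∪ ⋃ b ∈ s, B b) ∪ B a := by
      ext x
      simp only [Finset.set_biUnion_insert, Set.mem_union]
      tauto
    have hfin : (A ∪ ⋃ b ∈ s, B b).Finite :=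
      hA.union (Set.Finite.biUnion s.finite_toSet fun b hb => hB b (Finset.mem_insert_of_mem hb))
    have hdisj : Disjoint (A ∪ ⋃ b ∈ s, B b) (B a) := by
      rw [Set.disjoint_left]
      rintro x (hx | hx) hxa
      · exact (hAB a (Finset.mem_insert_self a s)).le_bot ⟨hx, hxa⟩
      · obtain ⟨b, hb, hxb⟩ := Set.mem_iUnion₂.1 hx
        exact (hBB b (Finset.mem_insert_of_mem hb) a (Finset.mem_insert_self a s)
          (fun h => ha (h ▸ hb))).le_bot ⟨hxb, hxa⟩
    rw [h1, Set.ncard_union_eq hdisj hfin (hB a (Finset.mem_insert_self a s)),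
      ih (fun b hb => hB b (Finset.mem_insert_of_mem hb))
        (fun b hb => hAB b (Finset.mem_insert_of_mem hb))
        (fun b hb c hc => hBB b (Finset.mem_insert_of_mem hb) c (Finset.mem_insert_of_mem hc)),
      Finset.sum_insert ha]
    ring

private lemma ncard_biUnion' {α β : Type*} [DecidableEq β] (F : Finset β)
    (B : β → Set α) (hB : ∀ b ∈ F, (B b).Finite)
    (hBB : ∀ b ∈ F, ∀ c ∈ F, b ≠ c → Disjoint (B b) (B c)) :
    (⋃ b ∈ F, B b).ncard = ∑ b ∈ F, (B b).ncard := by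
  simpa using ncard_union_biUnion ∅ F B (by simp) hB (by simp) hBB

theorem stmt16 (w : Ω → ℕ) (hw : ∀ s, 0 < w s) (F : Finset (List Ω))
    (hne : ∀ W ∈ F, W ≠ [])
    (hred : ∀ W ∈ F, ∀ V ∈ F, V ≠ W → ¬ V <:+: W) :
    ∀ n : ℕ, 1 ≤ n →
      fCount w F n + ∑ W ∈ F, fWCount w F W n =
        ∑ s : Ω, if w s ≤ n then fCount w F (n - w s) else 0 := by
  intro n hn
  classical
  set A : Set (List Ω) := {l : List Ω | wt w l = n ∧ ∀ V ∈ F, ¬ V <:+: l} with hA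
  set B : List Ω → Set (List Ω) := fun W => {l : List Ω | wt w l = n ∧ W <:+ l ∧
    ∀ V ∈ F, ∀ p s : List Ω, l = p ++ V ++ s → V = W ∧ s = []} with hB
  set U : Set (List Ω) := {l : List Ω | wt w l = n ∧ ∀ V ∈ F, ¬ V <:+: l.dropLast} with hU
  set Us : Ω → Set (List Ω) := fun s => {l : List Ω | l ∈ U ∧ l.getLast? = some s} with hUs
  -- words in U are nonempty
  have hUne : ∀ l ∈ U, l ≠ [] := by
    rintro l ⟨h1, -⟩ rfl
    simp [wt] at h1; omega
  -- any occurrence of a forbidden word in a word of U is a suffix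
  have key : ∀ l ∈ U, ∀ V ∈ F, ∀ p s : List Ω, l = p ++ V ++ s → s = [] := by
    rintro l ⟨-, hgood⟩ V hV p s hls
    by_contra hs
    apply hgood V hV
    refine ⟨p, s.dropLast, ?_⟩
    have hc : (p ++ V ++ s.dropLast) ++ [s.getLast hs] = p ++ V ++ s := by
      simp [List.append_assoc, List.dropLast_append_getLast hs]
    rw [hls, ← hc, List.dropLast_concat]
  -- U splits as A plus the B W's
  have hUeq : A ∪ ⋃ W ∈ F, B W = U := by
    ext l
    constructor
    · rintro (⟨h1, h2⟩ | hl)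
      · exact ⟨h1, fun V hV hinf => h2 V hV (hinf.trans (List.dropLast_prefix l).isInfix)⟩
      · obtain ⟨W, hW, h1, h2, h3⟩ := Set.mem_iUnion₂.1 hl
        refine ⟨h1, fun V hV hinf => ?_⟩
        obtain ⟨p, t, hpt⟩ := hinf
        have hlne : l ≠ [] := by
          rintro rfl; simp [wt] at h1; omega
        have : l = p ++ V ++ (t ++ [l.getLast hlne]) := by
          conv_lhs => rw [← List.dropLast_append_getLast hlne, ← hpt]
          simp
        exact absurd (h3 V hV p _ this).2 (by simp)
    · intro hl
      obtain ⟨h1, h2⟩ := hl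
      by_cases hgood : ∀ V ∈ F, ¬ V <:+: l
      · exact Or.inl ⟨h1, hgood⟩
      · push_neg at hgood
        obtain ⟨V, hV, p, s, hps⟩ := hgood
        have hs : s = [] := key l ⟨h1, h2⟩ V hV p s hps.symm
        subst hs
        have hVsuf : V <:+ l := ⟨p, by simpa using hps⟩
        refine Or.inr (Set.mem_iUnion₂.2 ⟨V, hV, h1, hVsuf, ?_⟩)
        intro V' hV' p' s' hls'
        have hs' : s' = [] := key l ⟨h1, h2⟩ V' hV' p' s' hls'
        subst hs'
        have hV'suf : V' <:+ l := ⟨p', by simp [hls']⟩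
        refine ⟨?_, rfl⟩
        by_contra hne'
        rcases List.suffix_or_suffix_of_suffix hV'suf hVsuf with h | h
        · exact hred V hV V' hV' hne' h.isInfix
        · exact hred V' hV' V hV (Ne.symm hne') h.isInfix
  -- disjointness
  have hAB : ∀ W ∈ F, Disjoint A (B W) := by
    intro W hW
    rw [Set.disjoint_left]
    rintro l ⟨-, h2⟩ ⟨-, hsuf, -⟩
    exact h2 W hW hsuf.isInfix
  have hBB : ∀ W ∈ F, ∀ W' ∈ F, W ≠ W' → Disjoint (B W) (B W') := by
    intro W hW W' hW' hne'
    rw [Set.disjoint_left]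
    rintro l ⟨-, ⟨p, hp⟩, -⟩ ⟨-, -, h3⟩
    exact hne' ((h3 W hW p [] (by simp [← hp])).1)
  have hAfin : A.Finite := wt_finite w hw _ n
  have hBfin : ∀ W ∈ F, (B W).Finite := fun W _ => wt_finite w hw _ n
  have hUsfin : ∀ s : Ω, (Us s).Finite := fun s =>
    (wt_finite w hw (fun _ => True) n).subset (fun l hl => ⟨hl.1.1, trivial⟩)
  -- LHS
  have hLHS : fCount w F n + ∑ W ∈ F, fWCount w F W n = U.ncard := by
    rw [← hUeq, ncard_union_biUnion A F B hAfin hBfin hAB hBB]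
    rfl
  -- U splits by last letter
  have hU2 : U = ⋃ s ∈ (Finset.univ : Finset Ω), Us s := by
    ext l
    simp only [Set.mem_iUnion₂, Finset.mem_univ, exists_true_left, hUs, Set.mem_setOf_eq]
    constructor
    · intro hl
      have hlne := hUne l hl
      exact ⟨l.getLast hlne, hl, List.getLast?_eq_getLast hlne⟩
    · rintro ⟨s, hl, -⟩; exact hl
  have hUsdisj : ∀ s ∈ (Finset.univ : Finset Ω), ∀ t ∈ (Finset.univ : Finset Ω), s ≠ t →
      Disjoint (Us s) (Us t) := by
    intro s _ t _ hst
    rw [Set.disjoint_left]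
    rintro l ⟨-, h1⟩ ⟨-, h2⟩
    rw [h1] at h2
    exact hst (by injection h2)
  -- per-letter count
  have hper : ∀ s : Ω, (Us s).ncard = if w s ≤ n then fCount w F (n - w s) else 0 := by
    intro s
    by_cases hws : w s ≤ n
    · rw [if_pos hws]
      have himg : Us s = (fun l : List Ω => l ++ [s]) ''
          {l : List Ω | wt w l = n - w s ∧ ∀ V ∈ F, ¬ V <:+: l} := by
        ext l
        constructor
        · rintro ⟨⟨h1, h2⟩, h3⟩
          have hlne : l ≠ [] := hUne l ⟨h1, h2⟩
          have hlast : l.getLast hlne = s := by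
            rw [List.getLast?_eq_getLast hlne] at h3; injection h3
          have hdec : l = l.dropLast ++ [s] := by
            conv_lhs => rw [← List.dropLast_append_getLast hlne, hlast]
          refine ⟨l.dropLast, ⟨?_, h2⟩, hdec.symm⟩
          have hwc := wt_concat w l.dropLast s
          rw [← hdec, h1] at hwc
          omega
        · rintro ⟨l', ⟨h1, h2⟩, rfl⟩
          refine ⟨⟨?_, ?_⟩, ?_⟩
          · rw [wt_concat, h1]
            omega
          · rw [List.dropLast_concat]; exact h2
          · simp
      rw [himg, Set.ncard_image_of_injective _ (fun a b h => by simpa using h)]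
      rfl
    · rw [if_neg hws]
      have : Us s = ∅ := by
        ext l
        simp only [Set.mem_empty_iff_false, iff_false, hUs, Set.mem_setOf_eq]
        rintro ⟨⟨h1, -⟩, h2⟩
        have hmem : s ∈ l := List.mem_of_getLast? h2
        exact hws (h1 ▸ mem_wt_le w hmem)
      rw [this, Set.ncard_empty]
  rw [hLHS, hU2, ncard_biUnion' _ _ (fun s _ => hUsfin s) hUsdisj]
  exact Finset.sum_congr rfl fun s _ => hper s
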